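/- For the Lie algebra of type G2 with highest root α̃, the Weyl alternation set A(α̃, 0) = {σ ∈ W : ℘(σ(α̃+ρ) − ρ) > 0} consists exactly of the identity, s1, and s2; every element of W of length at least 2 yields a weight σ(α̃+ρ) − ρ that is not a nonnegative integral combination of positive roots. -/

import Mathlib

namespace G2

/-- Weights for `G₂` written in coordinates with respect to the simple roots:
`(a, b)` stands for `a • α₁ + b • α₂`. -/
abbrev V := ℚ × ℚ

/-- The short simple root `α₁`. -/
def α1 : V := (1, 0)

/-- The long simple root `α₂`. -/
def α2 : V := (0, 1)

/-- The pairing `⟨v, α₁∨⟩` of a weight with the coroot of `α₁`. -/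
def pair1 (v : V) : ℚ := 2 * v.1 - 3 * v.2

/-- The pairing `⟨v, α₂∨⟩` of a weight with the coroot of `α₂`. -/
def pair2 (v : V) : ℚ := -v.1 + 2 * v.2

/-- The simple reflection corresponding to `α₁`, as a function. -/
def s1fun (v : V) : V := v - pair1 v • α1

/-- The simple reflection corresponding to `α₂`, as a function. -/
def s2fun (v : V) : V := v - pair2 v • α2

lemma s1fun_involutive : Function.Involutive s1fun := by
  intro v
  unfold s1fun pair1 α1
  apply Prod.ext <;> (simp; try ring)

lemma s2fun_involutive : Function.Involutive s2fun := by
  intro v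
  unfold s2fun pair2 α2
  apply Prod.ext <;> (simp; try ring)

/-- The simple reflection `s₁`. -/
def s1 : Equiv.Perm V := s1fun_involutive.toPerm

/-- The simple reflection `s₂`. -/
def s2 : Equiv.Perm V := s2fun_involutive.toPerm

/-- The Weyl group of `G₂`, generated by the simple reflections. -/
def W : Subgroup (Equiv.Perm V) := Subgroup.closure {s1, s2}

/-- The set of roots of `G₂`: the orbit of the simple roots under the Weyl group. -/
def Roots : Set V := {v | ∃ w ∈ W, v = w α1 ∨ v = w α2}

/-- The positive roots: roots that are nonnegative combinations of the simple roots. -/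
def PosRoots : Set V := {v ∈ Roots | 0 ≤ v.1 ∧ 0 ≤ v.2}

/-- The six positive roots of `G₂`, listed explicitly. -/
def posRoot : Fin 6 → V := ![(1,0),(0,1),(1,1),(2,1),(3,1),(3,2)]

/-- Kostant's partition function: the number of ways to write `ξ` as a nonnegative
integral combination of the positive roots of `G₂`. -/
noncomputable def kostant (ξ : V) : ℕ :=
  Set.ncard {f : Fin 6 → ℕ | ∑ i, (f i : ℚ) • posRoot i = ξ}

/-- The coefficient of `q^k` in the `q`-analog `℘_q(ξ)`: the number of ways to write `ξ`
as a nonnegative integral combination of the positive roots of `G₂` using exactly `k`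
roots counted with multiplicity. -/
noncomputable def kostantCount (k : ℕ) (ξ : V) : ℕ :=
  Set.ncard {f : Fin 6 → ℕ |
    (∑ i, (f i : ℚ) • posRoot i = ξ) ∧ ∑ i, f i = k}

/-- The length of a Weyl group element: the number of positive roots sent to
negative roots. -/
noncomputable def len (σ : Equiv.Perm V) : ℕ :=
  Set.ncard {v ∈ PosRoots | ¬ (0 ≤ (σ v).1 ∧ 0 ≤ (σ v).2)}

/-- The half-sum of the positive roots of `G₂`: `ρ = 5α₁ + 3α₂`. -/
def ρ : V := (5, 3)

/-- The highest root of `G₂`: `α̃ = 3α₁ + 2α₂`. -/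
def htilde : V := (3, 2)

end G2


namespace G2

abbrev M4 := ℤ × ℤ × ℤ × ℤ

def mfun (m : M4) (v : V) : V :=
  ((m.1 : ℚ) * v.1 + (m.2.1 : ℚ) * v.2, (m.2.2.1 : ℚ) * v.1 + (m.2.2.2 : ℚ) * v.2)

def mmul (m n : M4) : M4 :=
  (m.1 * n.1 + m.2.1 * n.2.2.1, m.1 * n.2.1 + m.2.1 * n.2.2.2,
   m.2.2.1 * n.1 + m.2.2.2 * n.2.2.1, m.2.2.1 * n.2.1 + m.2.2.2 * n.2.2.2)

def L : List M4 :=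
  [(1,0,0,1), (-1,3,0,1), (1,0,1,-1), (2,-3,1,-1), (-1,3,-1,2), (2,-3,1,-2),
   (-2,3,-1,2), (1,-3,1,-2), (-2,3,-1,1), (1,-3,0,-1), (-1,0,-1,1), (-1,0,0,-1)]

lemma L_mul_closed : ∀ m ∈ L, ∀ n ∈ L, mmul m n ∈ L := by decide
lemma L_inv : ∀ m ∈ L, ∃ n ∈ L, mmul n m = (1,0,0,1) := by decide

lemma mfun_mul (m n : M4) (v : V) : mfun m (mfun n v) = mfun (mmul m n) v := by
  unfold mfun mmul; apply Prod.ext <;> (simp; ring)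

lemma mfun_one (v : V) : mfun (1,0,0,1) v = v := by
  unfold mfun; apply Prod.ext <;> simp

lemma mfun_s1 (v : V) : mfun (-1,3,0,1) v = s1 v := by
  show _ = s1fun v
  unfold s1fun pair1 α1 mfun
  apply Prod.ext <;> (simp; try ring)

lemma mfun_s2 (v : V) : mfun (1,0,1,-1) v = s2 v := by
  show _ = s2fun v
  unfold s2fun pair2 α2 mfun
  apply Prod.ext <;> (simp; try ring)

lemma key : ∀ σ ∈ W, ∃ m ∈ L, ∀ v, σ v = mfun m v := by
  intro σ hσ
  induction hσ using Subgroup.closure_induction with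
  | mem x hx =>
    rcases hx with h | h
    · exact ⟨(-1,3,0,1), by decide, fun v => by rw [h, ← mfun_s1]⟩
    · exact ⟨(1,0,1,-1), by decide, fun v => by rw [h, ← mfun_s2]⟩
  | one => exact ⟨(1,0,0,1), by decide, fun v => (mfun_one v).symm⟩
  | mul x y hx hy ihx ihy =>
    obtain ⟨m, hm, hmx⟩ := ihx; obtain ⟨n, hn, hny⟩ := ihy
    exact ⟨mmul m n, L_mul_closed m hm n hn, fun v => by
      rw [Equiv.Perm.mul_apply, hny, hmx, mfun_mul]⟩
  | inv x hx ih =>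
    obtain ⟨m, hm, hmx⟩ := ih
    obtain ⟨n, hn, hnm⟩ := L_inv m hm
    refine ⟨n, hn, fun v => ?_⟩
    calc x⁻¹ v = mfun n (mfun m (x⁻¹ v)) := by rw [mfun_mul, hnm, mfun_one]
      _ = mfun n (x (x⁻¹ v)) := by rw [hmx]
      _ = mfun n v := by rw [← Equiv.Perm.mul_apply, mul_inv_cancel, Equiv.Perm.one_apply]

lemma pr0 : posRoot 0 = (1,0) := rfl
lemma pr1 : posRoot 1 = (0,1) := rfl
lemma pr2 : posRoot 2 = (1,1) := rfl
lemma pr3 : posRoot 3 = (2,1) := rfl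
lemma pr4 : posRoot 4 = (3,1) := rfl
lemma pr5 : posRoot 5 = (3,2) := rfl

lemma mem_kostant_set {ξ : V} {f : Fin 6 → ℕ}
    (hf : ∑ i, (f i : ℚ) • posRoot i = ξ) :
    (f 0 : ℚ) + f 2 + 2 * f 3 + 3 * f 4 + 3 * f 5 = ξ.1 ∧
    (f 1 : ℚ) + f 2 + f 3 + f 4 + 2 * f 5 = ξ.2 := by
  rw [Fin.sum_univ_six, pr0, pr1, pr2, pr3, pr4, pr5] at hf
  simp only [Prod.smul_mk, smul_eq_mul, Prod.mk_add_mk, Prod.ext_iff] at hf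
  obtain ⟨hf1, hf2⟩ := hf
  constructor <;> linarith

lemma kostant_eq_zero {ξ : V} (h : ξ.1 < 0 ∨ ξ.2 < 0) : kostant ξ = 0 := by
  have : {f : Fin 6 → ℕ | ∑ i, (f i : ℚ) • posRoot i = ξ} = ∅ := by
    ext f
    simp only [Set.mem_setOf_eq, Set.mem_empty_iff_false, iff_false]
    intro hf
    obtain ⟨h1, h2⟩ := mem_kostant_set hf
    have n0 : (0:ℚ) ≤ f 0 := Nat.cast_nonneg _
    have n1 : (0:ℚ) ≤ f 1 := Nat.cast_nonneg _
    have n2 : (0:ℚ) ≤ f 2 := Nat.cast_nonneg _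
    have n3 : (0:ℚ) ≤ f 3 := Nat.cast_nonneg _
    have n4 : (0:ℚ) ≤ f 4 := Nat.cast_nonneg _
    have n5 : (0:ℚ) ≤ f 5 := Nat.cast_nonneg _
    rcases h with h | h <;> linarith
  rw [kostant, this, Set.ncard_empty]

lemma kostant_finite (ξ : V) :
    {f : Fin 6 → ℕ | ∑ i, (f i : ℚ) • posRoot i = ξ}.Finite := by
  set N : ℕ := (⌈ξ.1 + ξ.2⌉).toNat with hN
  have hNQ : ξ.1 + ξ.2 ≤ (N : ℚ) := by
    calc ξ.1 + ξ.2 ≤ (⌈ξ.1 + ξ.2⌉ : ℚ) := Int.le_ceil _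
      _ ≤ ((N : ℤ) : ℚ) := by exact_mod_cast Int.self_le_toNat _
      _ = (N : ℚ) := by push_cast; ring
  apply Set.Finite.subset (Set.Finite.pi (fun _ : Fin 6 => Set.finite_Iic N))
  intro f hf
  simp only [Set.mem_setOf_eq] at hf
  obtain ⟨h1, h2⟩ := mem_kostant_set hf
  have n0 : (0:ℚ) ≤ f 0 := Nat.cast_nonneg _
  have n1 : (0:ℚ) ≤ f 1 := Nat.cast_nonneg _
  have n2 : (0:ℚ) ≤ f 2 := Nat.cast_nonneg _
  have n3 : (0:ℚ) ≤ f 3 := Nat.cast_nonneg _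
  have n4 : (0:ℚ) ≤ f 4 := Nat.cast_nonneg _
  have n5 : (0:ℚ) ≤ f 5 := Nat.cast_nonneg _
  have b0 : f 0 ≤ N := by exact_mod_cast show (f 0:ℚ) ≤ N by linarith
  have b1 : f 1 ≤ N := by exact_mod_cast show (f 1:ℚ) ≤ N by linarith
  have b2 : f 2 ≤ N := by exact_mod_cast show (f 2:ℚ) ≤ N by linarith
  have b3 : f 3 ≤ N := by exact_mod_cast show (f 3:ℚ) ≤ N by linarith
  have b4 : f 4 ≤ N := by exact_mod_cast show (f 4:ℚ) ≤ N by linarith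
  have b5 : f 5 ≤ N := by exact_mod_cast show (f 5:ℚ) ≤ N by linarith
  intro i _
  simp only [Set.mem_Iic]
  fin_cases i
  exacts [b0, b1, b2, b3, b4, b5]

lemma kostant_pos_of_witness {ξ : V} (f : Fin 6 → ℕ)
    (hf : ∑ i, (f i : ℚ) • posRoot i = ξ) : 0 < kostant ξ := by
  rw [kostant, Set.ncard_pos (kostant_finite ξ)]
  exact ⟨f, hf⟩

lemma kpos32 : 0 < kostant ((3:ℚ), (2:ℚ)) := by
  apply kostant_pos_of_witness ![0,0,0,0,0,1]
  rw [Fin.sum_univ_six, pr0, pr1, pr2, pr3, pr4, pr5]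
  norm_num [Prod.ext_iff]
  norm_num [show (![0,0,0,0,0,1] : Fin 6 → ℕ) 2 = 0 from rfl, show (![0,0,0,0,0,1] : Fin 6 → ℕ) 3 = 0 from rfl, show (![0,0,0,0,0,1] : Fin 6 → ℕ) 4 = 0 from rfl, show (![0,0,0,0,0,1] : Fin 6 → ℕ) 5 = 1 from rfl]

lemma kpos22 : 0 < kostant ((2:ℚ), (2:ℚ)) := by
  apply kostant_pos_of_witness ![0,0,2,0,0,0]
  rw [Fin.sum_univ_six, pr0, pr1, pr2, pr3, pr4, pr5]
  norm_num [Prod.ext_iff]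
  norm_num [show (![0,0,2,0,0,0] : Fin 6 → ℕ) 2 = 2 from rfl, show (![0,0,2,0,0,0] : Fin 6 → ℕ) 3 = 0 from rfl, show (![0,0,2,0,0,0] : Fin 6 → ℕ) 4 = 0 from rfl, show (![0,0,2,0,0,0] : Fin 6 → ℕ) 5 = 0 from rfl]

lemma kpos30 : 0 < kostant ((3:ℚ), (0:ℚ)) := by
  apply kostant_pos_of_witness ![3,0,0,0,0,0]
  rw [Fin.sum_univ_six, pr0, pr1, pr2, pr3, pr4, pr5]
  norm_num [Prod.ext_iff]
  norm_num [show (![3,0,0,0,0,0] : Fin 6 → ℕ) 2 = 0 from rfl, show (![3,0,0,0,0,0] : Fin 6 → ℕ) 3 = 0 from rfl, show (![3,0,0,0,0,0] : Fin 6 → ℕ) 4 = 0 from rfl, show (![3,0,0,0,0,0] : Fin 6 → ℕ) 5 = 0 from rfl]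

lemma posRoots_sub : PosRoots ⊆
    ({((1:ℚ),(0:ℚ)),((0:ℚ),(1:ℚ)),((1:ℚ),(1:ℚ)),((2:ℚ),(1:ℚ)),((3:ℚ),(1:ℚ)),((3:ℚ),(2:ℚ))} : Set V) := by
  rintro v ⟨⟨w, hw, hv⟩, h1, h2⟩
  obtain ⟨m, hm, hf⟩ := key w hw
  simp only [L, List.mem_cons, List.not_mem_nil, or_false] at hm
  rcases hv with rfl | rfl <;>
    rw [hf] at h1 h2 ⊢ <;>
    rcases hm with rfl|rfl|rfl|rfl|rfl|rfl|rfl|rfl|rfl|rfl|rfl|rfl <;>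
    norm_num [mfun, α1, α2, Set.mem_insert_iff, Set.mem_singleton_iff, Prod.ext_iff] at *

lemma len_one : len (1 : Equiv.Perm V) = 0 := by
  have hset : {v ∈ PosRoots | ¬ (0 ≤ ((1 : Equiv.Perm V) v).1 ∧ 0 ≤ ((1 : Equiv.Perm V) v).2)} = ∅ := by
    ext v
    simp only [Equiv.Perm.one_apply, Set.mem_setOf_eq, Set.mem_empty_iff_false, iff_false]
    rintro ⟨⟨_, hp1, hp2⟩, hc⟩
    exact hc ⟨hp1, hp2⟩
  rw [len, hset, Set.ncard_empty]

lemma len_s1_le : len s1 ≤ 1 := by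
  have hsub : {v ∈ PosRoots | ¬ (0 ≤ (s1 v).1 ∧ 0 ≤ (s1 v).2)} ⊆ {((1:ℚ),(0:ℚ))} := by
    rintro v ⟨hv, hc⟩
    have h6 := posRoots_sub hv
    simp only [Set.mem_insert_iff, Set.mem_singleton_iff] at h6
    rcases h6 with rfl|rfl|rfl|rfl|rfl|rfl
    · rfl
    · exact absurd (by rw [← mfun_s1]; norm_num [mfun]) hc
    · exact absurd (by rw [← mfun_s1]; norm_num [mfun]) hc
    · exact absurd (by rw [← mfun_s1]; norm_num [mfun]) hc
    · exact absurd (by rw [← mfun_s1]; norm_num [mfun]) hc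
    · exact absurd (by rw [← mfun_s1]; norm_num [mfun]) hc
  calc len s1 ≤ Set.ncard {((1:ℚ),(0:ℚ))} := Set.ncard_le_ncard hsub (Set.finite_singleton _)
    _ = 1 := Set.ncard_singleton _

lemma len_s2_le : len s2 ≤ 1 := by
  have hsub : {v ∈ PosRoots | ¬ (0 ≤ (s2 v).1 ∧ 0 ≤ (s2 v).2)} ⊆ {((0:ℚ),(1:ℚ))} := by
    rintro v ⟨hv, hc⟩
    have h6 := posRoots_sub hv
    simp only [Set.mem_insert_iff, Set.mem_singleton_iff] at h6
    rcases h6 with rfl|rfl|rfl|rfl|rfl|rfl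
    · exact absurd (by rw [← mfun_s2]; norm_num [mfun]) hc
    · rfl
    · exact absurd (by rw [← mfun_s2]; norm_num [mfun]) hc
    · exact absurd (by rw [← mfun_s2]; norm_num [mfun]) hc
    · exact absurd (by rw [← mfun_s2]; norm_num [mfun]) hc
    · exact absurd (by rw [← mfun_s2]; norm_num [mfun]) hc
  calc len s2 ≤ Set.ncard {((0:ℚ),(1:ℚ))} := Set.ncard_le_ncard hsub (Set.finite_singleton _)
    _ = 1 := Set.ncard_singleton _

lemma h85 : htilde + ρ = ((8:ℚ),(5:ℚ)) := by
  norm_num [htilde, ρ, Prod.ext_iff]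

end G2

open G2 in
/-- For G2 with highest root α̃, the Weyl alternation set
A(α̃, 0) = {σ ∈ W : ℘(σ(α̃+ρ) − ρ) > 0} consists exactly of the identity, s1 and s2;
and every element of W of length at least 2 yields a weight σ(α̃+ρ) − ρ that is not
a nonnegative integral combination of the simple roots. -/
theorem g2_weyl_alternation_set :
    {σ : Equiv.Perm V | σ ∈ W ∧ 0 < kostant (σ (htilde + ρ) - ρ)} =
      {1, s1, s2} ∧
    ∀ σ ∈ W, 2 ≤ len σ →
      ¬ ∃ a b : ℕ, σ (htilde + ρ) - ρ = (a : ℚ) • α1 + (b : ℚ) • α2 := by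
  constructor
  · ext σ
    simp only [Set.mem_setOf_eq, Set.mem_insert_iff, Set.mem_singleton_iff]
    constructor
    · rintro ⟨hσ, hk⟩
      obtain ⟨m, hm, hf⟩ := key σ hσ
      rw [h85, hf] at hk
      simp only [L, List.mem_cons, List.not_mem_nil, or_false] at hm
      rcases hm with rfl|rfl|rfl|rfl|rfl|rfl|rfl|rfl|rfl|rfl|rfl|rfl
      · left
        refine Equiv.ext fun v => ?_
        rw [hf v, mfun_one]
        exact (Equiv.Perm.one_apply v).symm
      · right; left
        exact Equiv.ext fun v => by rw [hf v, mfun_s1]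
      · right; right
        exact Equiv.ext fun v => by rw [hf v, mfun_s2]
      all_goals
        exact absurd hk (by
          rw [kostant_eq_zero (by norm_num [mfun, ρ, Prod.fst_sub, Prod.snd_sub])]
          norm_num)
    · rintro (rfl | rfl | rfl)
      · refine ⟨one_mem W, ?_⟩
        have hv : (1 : Equiv.Perm V) (htilde + ρ) - ρ = ((3:ℚ),(2:ℚ)) := by
          rw [Equiv.Perm.one_apply, h85]
          norm_num [ρ, Prod.ext_iff]
        rw [hv]; exact kpos32
      · refine ⟨Subgroup.subset_closure (Set.mem_insert _ _), ?_⟩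
        have hv : s1 (htilde + ρ) - ρ = ((2:ℚ),(2:ℚ)) := by
          rw [h85, ← mfun_s1]
          norm_num [mfun, ρ, Prod.ext_iff]
        rw [hv]; exact kpos22
      · refine ⟨Subgroup.subset_closure (Set.mem_insert_of_mem _ rfl), ?_⟩
        have hv : s2 (htilde + ρ) - ρ = ((3:ℚ),(0:ℚ)) := by
          rw [h85, ← mfun_s2]
          norm_num [mfun, ρ, Prod.ext_iff]
        rw [hv]; exact kpos30
  · rintro σ hσ hlen ⟨a, b, hab⟩
    obtain ⟨m, hm, hf⟩ := key σ hσ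
    have ha : (0:ℚ) ≤ a := Nat.cast_nonneg a
    have hb : (0:ℚ) ≤ b := Nat.cast_nonneg b
    rw [h85, hf] at hab
    simp only [L, List.mem_cons, List.not_mem_nil, or_false] at hm
    rcases hm with rfl|rfl|rfl|rfl|rfl|rfl|rfl|rfl|rfl|rfl|rfl|rfl
    · have hσ1 : σ = 1 := Equiv.ext fun v => by
        rw [hf v, mfun_one]; exact (Equiv.Perm.one_apply v).symm
      rw [hσ1, len_one] at hlen
      omega
    · have hσ1 : σ = s1 := Equiv.ext fun v => by rw [hf v, mfun_s1]
      rw [hσ1] at hlen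
      have := len_s1_le
      omega
    · have hσ1 : σ = s2 := Equiv.ext fun v => by rw [hf v, mfun_s2]
      rw [hσ1] at hlen
      have := len_s2_le
      omega
    all_goals
      norm_num [mfun, ρ, α1, α2, Prod.ext_iff] at hab
    all_goals
      linarith [hab.1, hab.2]
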